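/- For every compact subset K of {z ∈ ℂ : |z| ≠ 1}, sup_{z ∈ K} |φ^{1,N}(z) − π^{−1} 𝟙_{|z|≤1}| → 0 as N → ∞; equivalently, sup_{z ∈ K} |e^{−N|z|²} e_N(N|z|²) − 𝟙_{|z|≤1}| → 0 as N → ∞. -/

import Mathlib

open MeasureTheory Real Filter

/-- Truncated exponential series `e_N(t) = ∑_{ℓ=0}^{N-1} tˡ/ℓ!`. -/
noncomputable def eN (N : ℕ) (t : ℝ) : ℝ := ∑ ℓ ∈ Finset.range N, t ^ ℓ / (Nat.factorial ℓ)

/-- One-particle marginal density `φ^{1,N}(z) = π⁻¹ e^{-N|z|²} e_N(N|z|²)`, `z ∈ ℂ`. -/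
noncomputable def phi1C (N : ℕ) (z : ℂ) : ℝ :=
  (Real.pi)⁻¹ * Real.exp (-(N : ℝ) * ‖z‖ ^ 2) * eN N ((N : ℝ) * ‖z‖ ^ 2)

private lemma factle (ℓ j N : ℕ) (h : ℓ + j ≤ N) :
    (ℓ + j).factorial ≤ ℓ.factorial * N ^ j := by
  induction j with
  | zero => simp
  | succ j ih =>
    have h' : ℓ + j ≤ N := by omega
    calc (ℓ + (j + 1)).factorial = (ℓ + j + 1) * (ℓ + j).factorial := rfl
      _ ≤ N * (ℓ.factorial * N ^ j) := Nat.mul_le_mul h (ih h')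
      _ = ℓ.factorial * N ^ (j + 1) := by ring

private lemma factge (N i : ℕ) : N.factorial * N ^ i ≤ (N + i).factorial := by
  calc N.factorial * N ^ i ≤ N.factorial * (N + 1) ^ i :=
        Nat.mul_le_mul_left _ (Nat.pow_le_pow_left (Nat.le_succ N) i)
    _ ≤ (N + i).factorial := Nat.factorial_mul_pow_le_factorial

private lemma g_mono {t s : ℝ} (ht : 0 ≤ t) (hs : 0 < s) (h : 0 ≤ (s - t) * (1 - s)) :
    t * Real.exp (1 - t) ≤ s * Real.exp (1 - s) := by
  have h1 : t ≤ s * Real.exp (t - s) := by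
    nlinarith [Real.add_one_le_exp (t - s), Real.exp_pos (t - s)]
  calc t * Real.exp (1 - t) ≤ (s * Real.exp (t - s)) * Real.exp (1 - t) :=
        mul_le_mul_of_nonneg_right h1 (Real.exp_pos _).le
    _ = s * Real.exp (1 - s) := by
        rw [mul_assoc, ← Real.exp_add]; congr 1; ring

private lemma glt {a : ℝ} (h1 : a ≠ 1) : a * Real.exp (1 - a) < 1 := by
  have h2 : a - 1 ≠ 0 := fun h => h1 (by linarith [sub_eq_zero.mp h])
  have h3 : a < Real.exp (a - 1) := by
    have := Real.add_one_lt_exp h2; linarith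
  calc a * Real.exp (1 - a) < Real.exp (a - 1) * Real.exp (1 - a) :=
        mul_lt_mul_of_pos_right h3 (Real.exp_pos _)
    _ = 1 := by rw [← Real.exp_add]; norm_num

private lemma term_bound {t : ℝ} (ht : 0 ≤ t) (N : ℕ) :
    Real.exp (-((N : ℝ) * t)) * (((N : ℝ) * t) ^ N / N.factorial)
      ≤ (t * Real.exp (1 - t)) ^ N := by
  have hfpos : (0 : ℝ) < N.factorial := by positivity
  have hfac : ((N : ℝ)) ^ N / N.factorial ≤ Real.exp N :=
    Real.pow_div_factorial_le_exp (N : ℝ) (Nat.cast_nonneg N) N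
  have e1 : Real.exp (-((N : ℝ) * t)) * (((N : ℝ) * t) ^ N / N.factorial)
      = (t ^ N * Real.exp (-((N : ℝ) * t))) * (((N : ℝ)) ^ N / N.factorial) := by
    rw [mul_pow]; ring
  rw [e1]
  have h2 : (t ^ N * Real.exp (-((N : ℝ) * t))) * (((N : ℝ)) ^ N / N.factorial)
      ≤ (t ^ N * Real.exp (-((N : ℝ) * t))) * Real.exp N :=
    mul_le_mul_of_nonneg_left hfac (by positivity)
  refine h2.trans_eq ?_
  rw [mul_pow, ← Real.exp_nat_mul, mul_assoc, ← Real.exp_add]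
  congr 1; ring

private lemma eN_nonneg {N : ℕ} {x : ℝ} (hx : 0 ≤ x) : 0 ≤ eN N x := by
  unfold eN
  exact Finset.sum_nonneg fun i _ => by positivity

private lemma sub_bound {t : ℝ} (ht0 : 0 ≤ t) (ht1 : t < 1) (N : ℕ) (hN : 1 ≤ N) :
    |Real.exp (-((N : ℝ) * t)) * eN N ((N : ℝ) * t) - 1|
      ≤ (t * Real.exp (1 - t)) ^ N * (1 - t)⁻¹ := by
  set l : ℝ := (N : ℝ) * t with hl
  have hl0 : 0 ≤ l := by positivity
  have hexpeN : eN N l ≤ Real.exp l := Real.sum_le_exp_of_nonneg hl0 N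
  have hfle : Real.exp (-l) * eN N l ≤ 1 := by
    calc Real.exp (-l) * eN N l ≤ Real.exp (-l) * Real.exp l :=
          mul_le_mul_of_nonneg_left hexpeN (Real.exp_pos _).le
      _ = 1 := by rw [← Real.exp_add]; simp
  have hsum : Summable (fun i : ℕ => l ^ i / i.factorial) :=
    Real.summable_pow_div_factorial l
  have hexp : Real.exp l = ∑' i : ℕ, l ^ i / i.factorial := by
    rw [Real.exp_eq_exp_ℝ, NormedSpace.exp_eq_tsum_div]
  have hsplit : (∑ i ∈ Finset.range N, l ^ i / i.factorial)
      + ∑' i : ℕ, l ^ (i + N) / (i + N).factorial = ∑' i : ℕ, l ^ i / i.factorial :=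
    Summable.sum_add_tsum_nat_add N hsum
  have htail : Real.exp l - eN N l = ∑' i : ℕ, l ^ (i + N) / (i + N).factorial := by
    rw [hexp]; unfold eN; linarith [hsplit]
  -- termwise bound on the tail
  have hterm : ∀ i : ℕ, l ^ (i + N) / (i + N).factorial ≤ (l ^ N / N.factorial) * t ^ i := by
    intro i
    · have hNr : (0 : ℝ) < (N : ℝ) := by exact_mod_cast hN
      have h1 : l ^ (i + N) / (i + N).factorial ≤ l ^ (i + N) / (N.factorial * (N : ℝ) ^ i) := by
        apply div_le_div_of_nonneg_left (pow_nonneg hl0 _)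
          (mul_pos (by positivity) (pow_pos hNr i))
        have := factge N i
        have : (N.factorial * N ^ i : ℝ) ≤ ((N + i).factorial : ℝ) := by exact_mod_cast this
        calc (N.factorial * (N:ℝ) ^ i) ≤ ((N + i).factorial : ℝ) := by push_cast at this ⊢; linarith
          _ = ((i + N).factorial : ℝ) := by rw [Nat.add_comm]
      refine h1.trans_eq ?_
      rw [hl, pow_add, mul_pow]
      field_simp
  have hgeo : Summable (fun i : ℕ => (l ^ N / N.factorial) * t ^ i) :=
    (summable_geometric_of_lt_one ht0 ht1).mul_left _
  have htailsummable : Summable (fun i : ℕ => l ^ (i + N) / (i + N).factorial) :=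
    (summable_nat_add_iff N).mpr hsum
  have htsum : (∑' i : ℕ, l ^ (i + N) / (i + N).factorial)
      ≤ (l ^ N / N.factorial) * (1 - t)⁻¹ := by
    calc (∑' i : ℕ, l ^ (i + N) / (i + N).factorial)
        ≤ ∑' i : ℕ, (l ^ N / N.factorial) * t ^ i :=
          Summable.tsum_le_tsum hterm htailsummable hgeo
      _ = (l ^ N / N.factorial) * (1 - t)⁻¹ := by
          rw [tsum_mul_left, tsum_geometric_of_lt_one ht0 ht1]
  rw [abs_sub_comm, abs_of_nonneg (by linarith)]
  have key : 1 - Real.exp (-l) * eN N l = Real.exp (-l) * (Real.exp l - eN N l) := by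
    rw [mul_sub, ← Real.exp_add]; simp
  rw [key, htail]
  calc Real.exp (-l) * (∑' i : ℕ, l ^ (i + N) / (i + N).factorial)
      ≤ Real.exp (-l) * ((l ^ N / N.factorial) * (1 - t)⁻¹) :=
        mul_le_mul_of_nonneg_left htsum (Real.exp_pos _).le
    _ = (Real.exp (-l) * (l ^ N / N.factorial)) * (1 - t)⁻¹ := by ring
    _ ≤ (t * Real.exp (1 - t)) ^ N * (1 - t)⁻¹ := by
        apply mul_le_mul_of_nonneg_right (term_bound ht0 N) (inv_nonneg.mpr (by linarith))

private lemma sup_bound {t : ℝ} (ht : 1 < t) (N : ℕ) (hN : 1 ≤ N) :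
    Real.exp (-((N : ℝ) * t)) * eN N ((N : ℝ) * t)
      ≤ (t * Real.exp (1 - t)) ^ N * (t - 1)⁻¹ := by
  obtain ⟨M, rfl⟩ : ∃ M, N = M + 1 := ⟨N - 1, by omega⟩
  set N := M + 1
  set l : ℝ := (N : ℝ) * t with hl
  have ht0 : (0 : ℝ) ≤ t := by linarith
  have hl0 : 0 ≤ l := by positivity
  have hNr : (0 : ℝ) < (N : ℝ) := by positivity
  have htinv0 : 0 ≤ t⁻¹ := by positivity
  have htinv1 : t⁻¹ < 1 := by
    rw [inv_lt_one_iff₀]; right; exact ht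
  -- termwise bound
  have hterm : ∀ ℓ ∈ Finset.range N, l ^ ℓ / ℓ.factorial
      ≤ (l ^ M / M.factorial) * (t⁻¹) ^ (M - ℓ) := by
    intro ℓ hℓ
    have hℓM : ℓ ≤ M := by simpa [N, Nat.lt_succ_iff] using hℓ
    obtain ⟨j, rfl⟩ : ∃ j, M = ℓ + j := ⟨M - ℓ, by omega⟩
    have hfle : ((ℓ + j).factorial : ℝ) ≤ (ℓ.factorial : ℝ) * (N : ℝ) ^ j := by
      have := factle ℓ j N (by omega)
      exact_mod_cast this
    have hMl : ℓ + j - ℓ = j := by omega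
    rw [hMl]
    rw [div_le_iff₀ (by positivity)]
    have hexpand : (l ^ (ℓ + j) / (ℓ + j).factorial) * t⁻¹ ^ j
        = l ^ ℓ * ((N : ℝ) ^ j / ((ℓ + j).factorial : ℝ)) := by
      rw [hl, pow_add, mul_pow]
      field_simp
      rw [← mul_pow, mul_assoc, mul_one_div_cancel (ne_of_gt (by linarith)), mul_one]
    have hFpos : (0 : ℝ) < ((ℓ + j).factorial : ℝ) := by positivity
    have hone : (1 : ℝ) ≤ ((N : ℝ) ^ j / ((ℓ + j).factorial : ℝ)) * (ℓ.factorial : ℝ) := by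
      rw [div_mul_eq_mul_div, le_div_iff₀ hFpos, one_mul]
      calc ((ℓ + j).factorial : ℝ) ≤ (ℓ.factorial : ℝ) * (N : ℝ) ^ j := hfle
        _ = (N : ℝ) ^ j * (ℓ.factorial : ℝ) := by ring
    rw [hexpand, mul_assoc]
    nlinarith [pow_nonneg hl0 ℓ, hone]
  have hsum : eN N l ≤ (l ^ M / M.factorial) * (1 - t⁻¹)⁻¹ := by
    unfold eN
    calc (∑ ℓ ∈ Finset.range N, l ^ ℓ / ℓ.factorial)
        ≤ ∑ ℓ ∈ Finset.range N, (l ^ M / M.factorial) * (t⁻¹) ^ (M - ℓ) :=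
          Finset.sum_le_sum hterm
      _ = ∑ ℓ ∈ Finset.range N, (l ^ M / M.factorial) * (t⁻¹) ^ ℓ := by
          rw [← Finset.sum_range_reflect]
          apply Finset.sum_congr rfl
          intro i hi
          rw [Finset.mem_range] at hi
          have : M - (N - 1 - i) = i := by simp only [N] at hi ⊢; omega
          rw [this]
      _ ≤ (l ^ M / M.factorial) * (1 - t⁻¹)⁻¹ := by
          rw [← Finset.mul_sum]
          apply mul_le_mul_of_nonneg_left _ (by positivity)
          calc (∑ ℓ ∈ Finset.range N, (t⁻¹) ^ ℓ) ≤ ∑' ℓ : ℕ, (t⁻¹) ^ ℓ :=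
                Summable.sum_le_tsum _ (fun i _ => by positivity)
                  (summable_geometric_of_lt_one htinv0 htinv1)
            _ = (1 - t⁻¹)⁻¹ := tsum_geometric_of_lt_one htinv0 htinv1
  have hMfact : (l ^ M / M.factorial) = (l ^ N / N.factorial) * (N : ℝ) / l := by
    have hlne : l ≠ 0 := by positivity
    have : (N.factorial : ℝ) = (N : ℝ) * (M.factorial : ℝ) := by
      rw [show N.factorial = N * M.factorial from rfl]
      push_cast
      ring
    rw [this, pow_succ]
    field_simp
  have hNl : (N : ℝ) / l = t⁻¹ := by
    rw [hl]; field_simp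
  calc Real.exp (-l) * eN N l
      ≤ Real.exp (-l) * ((l ^ M / M.factorial) * (1 - t⁻¹)⁻¹) := by
        apply mul_le_mul_of_nonneg_left hsum (Real.exp_pos _).le
    _ = (Real.exp (-l) * (l ^ N / N.factorial)) * (t⁻¹ * (1 - t⁻¹)⁻¹) := by
        rw [hMfact, mul_div_assoc, hNl]; ring
    _ = (Real.exp (-l) * (l ^ N / N.factorial)) * (t - 1)⁻¹ := by
        congr 1
        rw [← mul_inv]
        congr 1
        field_simp
    _ ≤ (t * Real.exp (1 - t)) ^ N * (t - 1)⁻¹ := by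
        apply mul_le_mul_of_nonneg_right _ (inv_nonneg.mpr (by linarith))
        have := term_bound ht0 N
        calc Real.exp (-l) * (l ^ N / N.factorial)
            = Real.exp (-((N:ℝ) * t)) * (((N:ℝ) * t) ^ N / N.factorial) := by rw [hl]
          _ ≤ (t * Real.exp (1 - t)) ^ N := term_bound ht0 N

/-- Uniform convergence of `φ^{1,N}` to `π⁻¹𝟙_{|z|≤1}` on compact sets avoiding the unit
circle; equivalently for `e^{-N|z|²}e_N(N|z|²)` and `𝟙_{|z|≤1}`. -/
theorem stmt3 (K : Set ℂ) (hK : IsCompact K) (hK1 : ∀ z ∈ K, ‖z‖ ≠ 1) :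
    TendstoUniformlyOn (fun (N : ℕ) (z : ℂ) => phi1C N z)
      (fun z => if ‖z‖ ≤ 1 then (Real.pi)⁻¹ else 0) atTop K
    ∧ TendstoUniformlyOn
        (fun (N : ℕ) (z : ℂ) =>
          Real.exp (-(N : ℝ) * ‖z‖ ^ 2) * eN N ((N : ℝ) * ‖z‖ ^ 2))
        (fun z => if ‖z‖ ≤ 1 then 1 else 0) atTop K := by
  -- extract subcritical radius bound
  obtain ⟨a, ha0, ha1, haK⟩ : ∃ a : ℝ, 0 < a ∧ a < 1 ∧
      ∀ z ∈ K, ‖z‖ ≤ 1 → ‖z‖ ^ 2 ≤ a := by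
    have hcl : IsClosed {z : ℂ | ‖z‖ ≤ 1} :=
      isClosed_le continuous_norm continuous_const
    have hK1c : IsCompact (K ∩ {z : ℂ | ‖z‖ ≤ 1}) := hK.inter_right hcl
    rcases (K ∩ {z : ℂ | ‖z‖ ≤ 1}).eq_empty_or_nonempty with he | hne
    · refine ⟨1/2, by norm_num, by norm_num, fun z hz h1 => absurd ?_ (Set.notMem_empty z)⟩
      rw [← he]; exact ⟨hz, h1⟩
    · obtain ⟨w, hwK, hw⟩ := hK1c.exists_isMaxOn hne continuous_norm.continuousOn
      have hw1 : ‖w‖ < 1 := lt_of_le_of_ne hwK.2 (hK1 w hwK.1)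
      refine ⟨max (‖w‖ ^ 2) (1/2), lt_max_of_lt_right (by norm_num),
        max_lt (by nlinarith [norm_nonneg w]) (by norm_num), fun z hz h1 => ?_⟩
      have : ‖z‖ ≤ ‖w‖ := hw ⟨hz, h1⟩
      exact le_max_of_le_left (by nlinarith [norm_nonneg z])
  -- extract supercritical radius bound
  obtain ⟨b, hb1, hbK⟩ : ∃ b : ℝ, 1 < b ∧
      ∀ z ∈ K, ¬ ‖z‖ ≤ 1 → b ≤ ‖z‖ ^ 2 := by
    have hcl : IsClosed {z : ℂ | 1 ≤ ‖z‖} :=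
      isClosed_le continuous_const continuous_norm
    have hK2c : IsCompact (K ∩ {z : ℂ | 1 ≤ ‖z‖}) := hK.inter_right hcl
    rcases (K ∩ {z : ℂ | 1 ≤ ‖z‖}).eq_empty_or_nonempty with he | hne
    · refine ⟨2, by norm_num, fun z hz h1 => absurd ?_ (Set.notMem_empty z)⟩
      rw [← he]; exact ⟨hz, le_of_lt (lt_of_not_ge h1)⟩
    · obtain ⟨w, hwK, hw⟩ := hK2c.exists_isMinOn hne continuous_norm.continuousOn
      have hw1 : 1 < ‖w‖ := lt_of_le_of_ne hwK.2 (Ne.symm (hK1 w hwK.1))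
      refine ⟨‖w‖ ^ 2, by nlinarith, fun z hz h1 => ?_⟩
      have hz1 : 1 ≤ ‖z‖ := le_of_lt (lt_of_not_ge h1)
      have : ‖w‖ ≤ ‖z‖ := hw ⟨hz, hz1⟩
      nlinarith [norm_nonneg z]
  set r₁ : ℝ := a * Real.exp (1 - a) with hr₁
  set r₂ : ℝ := b * Real.exp (1 - b) with hr₂
  have hr₁0 : 0 ≤ r₁ := by positivity
  have hr₂0 : 0 ≤ r₂ := by positivity
  have hr₁1 : r₁ < 1 := glt (ne_of_lt ha1)
  have hr₂1 : r₂ < 1 := glt (ne_of_gt hb1)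
  set B : ℕ → ℝ := fun N => r₁ ^ N * (1 - a)⁻¹ + r₂ ^ N * (b - 1)⁻¹ with hB
  have hBtend : Tendsto B atTop (nhds 0) := by
    have h1 : Tendsto (fun N : ℕ => r₁ ^ N * (1 - a)⁻¹) atTop (nhds 0) := by
      simpa using (tendsto_pow_atTop_nhds_zero_of_lt_one hr₁0 hr₁1).mul_const (1 - a)⁻¹
    have h2 : Tendsto (fun N : ℕ => r₂ ^ N * (b - 1)⁻¹) atTop (nhds 0) := by
      simpa using (tendsto_pow_atTop_nhds_zero_of_lt_one hr₂0 hr₂1).mul_const (b - 1)⁻¹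
    simpa using h1.add h2
  -- the main pointwise bound
  have hbound : ∀ N : ℕ, 1 ≤ N → ∀ z ∈ K,
      |(if ‖z‖ ≤ 1 then (1:ℝ) else 0)
        - Real.exp (-(N : ℝ) * ‖z‖ ^ 2) * eN N ((N : ℝ) * ‖z‖ ^ 2)|
      ≤ B N := by
    intro N hN z hz
    set t : ℝ := ‖z‖ ^ 2 with htdef
    have ht0 : 0 ≤ t := by positivity
    have hneg : (-(N : ℝ)) * t = -((N : ℝ) * t) := by ring
    by_cases hcase : ‖z‖ ≤ 1
    · have hta : t ≤ a := haK z hz hcase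
      have ht1 : t < 1 := lt_of_le_of_lt hta ha1
      rw [if_pos hcase, hneg, abs_sub_comm]
      have h1 : |Real.exp (-((N : ℝ) * t)) * eN N ((N : ℝ) * t) - 1|
          ≤ (t * Real.exp (1 - t)) ^ N * (1 - t)⁻¹ := sub_bound ht0 ht1 N hN
      have h2 : (t * Real.exp (1 - t)) ^ N ≤ r₁ ^ N :=
        pow_le_pow_left₀ (mul_nonneg ht0 (Real.exp_pos _).le)
          (g_mono ht0 ha0 (by nlinarith)) N
      have h3 : (1 - t)⁻¹ ≤ (1 - a)⁻¹ := by
        apply inv_anti₀ (by linarith) (by linarith)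
      have h4 : (t * Real.exp (1 - t)) ^ N * (1 - t)⁻¹ ≤ r₁ ^ N * (1 - a)⁻¹ :=
        mul_le_mul h2 h3 (inv_nonneg.mpr (by linarith)) (pow_nonneg hr₁0 N)
      have h5 : 0 ≤ r₂ ^ N * (b - 1)⁻¹ :=
        mul_nonneg (pow_nonneg hr₂0 N) (inv_nonneg.mpr (by linarith))
      rw [hB]; dsimp only; linarith
    · have htb : b ≤ t := hbK z hz hcase
      have ht1 : 1 < t := lt_of_lt_of_le hb1 htb
      rw [if_neg hcase, hneg, abs_sub_comm, sub_zero]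
      have hf0 : 0 ≤ Real.exp (-((N : ℝ) * t)) * eN N ((N : ℝ) * t) :=
        mul_nonneg (Real.exp_pos _).le (eN_nonneg (by positivity))
      rw [abs_of_nonneg hf0]
      have h1 : Real.exp (-((N : ℝ) * t)) * eN N ((N : ℝ) * t)
          ≤ (t * Real.exp (1 - t)) ^ N * (t - 1)⁻¹ := sup_bound ht1 N hN
      have h2 : (t * Real.exp (1 - t)) ^ N ≤ r₂ ^ N := by
        apply pow_le_pow_left₀ (mul_nonneg ht0 (Real.exp_pos _).le) _ N
        have : 0 ≤ (b - t) * (1 - b) := by nlinarith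
        exact g_mono ht0 (by linarith) this
      have h3 : (t - 1)⁻¹ ≤ (b - 1)⁻¹ := by
        apply inv_anti₀ (by linarith) (by linarith)
      have h4 : (t * Real.exp (1 - t)) ^ N * (t - 1)⁻¹ ≤ r₂ ^ N * (b - 1)⁻¹ :=
        mul_le_mul h2 h3 (inv_nonneg.mpr (by linarith)) (pow_nonneg hr₂0 N)
      have h5 : 0 ≤ r₁ ^ N * (1 - a)⁻¹ :=
        mul_nonneg (pow_nonneg hr₁0 N) (inv_nonneg.mpr (by linarith))
      rw [hB]; dsimp only; linarith
  -- second conjunct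
  have key : TendstoUniformlyOn
      (fun (N : ℕ) (z : ℂ) =>
        Real.exp (-(N : ℝ) * ‖z‖ ^ 2) * eN N ((N : ℝ) * ‖z‖ ^ 2))
      (fun z => if ‖z‖ ≤ 1 then 1 else 0) atTop K := by
    rw [Metric.tendstoUniformlyOn_iff]
    intro ε hε
    have hev : ∀ᶠ N : ℕ in atTop, B N < ε := hBtend.eventually_lt_const hε
    filter_upwards [hev, eventually_ge_atTop 1] with N h1 h2 z hz
    rw [Real.dist_eq]
    exact lt_of_le_of_lt (hbound N h2 z hz) h1
  refine ⟨?_, key⟩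
  -- first conjunct follows by scaling with π⁻¹
  rw [Metric.tendstoUniformlyOn_iff] at key ⊢
  intro ε hε
  have hπ : (0 : ℝ) < Real.pi := Real.pi_pos
  filter_upwards [key (ε * Real.pi) (by positivity)] with N h z hz
  have h' := h z hz
  rw [Real.dist_eq] at h' ⊢
  have heq : (if ‖z‖ ≤ 1 then (Real.pi)⁻¹ else 0) - phi1C N z
      = (Real.pi)⁻¹ * ((if ‖z‖ ≤ 1 then (1:ℝ) else 0)
          - Real.exp (-(N : ℝ) * ‖z‖ ^ 2) * eN N ((N : ℝ) * ‖z‖ ^ 2)) := by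
    unfold phi1C
    split <;> ring
  rw [heq, abs_mul, abs_of_nonneg (inv_nonneg.mpr hπ.le)]
  have h2 := mul_lt_mul_of_pos_left h' (inv_pos.mpr hπ)
  have h3 : (Real.pi)⁻¹ * (ε * Real.pi) = ε := by field_simp
  linarith
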